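/- Let (S,T) be a (2,k)-configuration with T = (T1,T2), and let V1 be a fixed linear order on C = {c_1,…,c_m}. The number of linear orders V2 on C such that the two-vote election (C,(V1,V2)) avoids (S,T) equals S_m(π, π^{-1}), the number of m-permutations avoiding both the pattern π = p(T1,T2) and its inverse π^{-1}. -/

import Mathlib

structure Election where
  nvoters : ℕ
  ncands : ℕ
  votes : Fin nvoters → Equiv.Perm (Fin ncands)

def ElectionContains (E F : Election) : Prop :=
  ∃ f : Fin F.nvoters → Fin E.nvoters, ∃ g : Fin F.ncands → Fin E.ncands,
    Function.Injective f ∧ Function.Injective g ∧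
    ∀ (i : Fin F.nvoters) (x y : Fin F.ncands),
      F.votes i x < F.votes i y → E.votes (f i) (g x) < E.votes (f i) (g y)

def PatternContains {m k : ℕ} (τ : Equiv.Perm (Fin m)) (π : Equiv.Perm (Fin k)) : Prop :=
  ∃ μ ρ : Fin k → Fin m, StrictMono μ ∧ StrictMono ρ ∧ ∀ j, τ (ρ j) = μ (π j)

private lemma pattern_aux {m k : ℕ} (A₁ A₂ : Equiv.Perm (Fin k))
    (B₁ B₂ : Equiv.Perm (Fin m)) :
    (∃ g : Fin k → Fin m, Function.Injective g ∧
      (∀ x y, A₁ x < A₁ y → B₁ (g x) < B₁ (g y)) ∧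
      (∀ x y, A₂ x < A₂ y → B₂ (g x) < B₂ (g y))) ↔
    PatternContains (B₂ * B₁⁻¹) (A₂ * A₁⁻¹) := by
  constructor
  · rintro ⟨g, hg, h1, h2⟩
    refine ⟨fun j => B₂ (g (A₂⁻¹ j)), fun j => B₁ (g (A₁⁻¹ j)), ?_, ?_, ?_⟩
    · intro a b hab
      apply h2
      simp [hab]
    · intro a b hab
      apply h1
      simp [hab]
    · intro j
      simp [Equiv.Perm.mul_apply]
  · rintro ⟨μ, ρ, hμ, hρ, hcom⟩
    refine ⟨fun x => B₁⁻¹ (ρ (A₁ x)), ?_, ?_, ?_⟩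
    · intro x y h
      simpa using hρ.injective (B₁⁻¹.injective h)
    · intro x y h
      simpa using hρ h
    · intro x y h
      have hx := hcom (A₁ x)
      have hy := hcom (A₁ y)
      simp [Equiv.Perm.mul_apply] at hx hy
      show B₂ (B₁.symm (ρ (A₁ x))) < B₂ (B₁.symm (ρ (A₁ y)))
      rw [hx, hy]
      exact hμ h

private lemma pattern_inv {m k : ℕ} (τ : Equiv.Perm (Fin m)) (π : Equiv.Perm (Fin k)) :
    PatternContains τ π → PatternContains τ⁻¹ π⁻¹ := by
  rintro ⟨μ, ρ, hμ, hρ, hcom⟩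
  refine ⟨ρ, μ, hρ, hμ, fun j => ?_⟩
  have := hcom (π⁻¹ j)
  simp at this
  rw [← this]
  simp

private lemma pattern_inv_iff {m k : ℕ} (τ : Equiv.Perm (Fin m)) (π : Equiv.Perm (Fin k)) :
    PatternContains τ⁻¹ π ↔ PatternContains τ π⁻¹ := by
  constructor
  · intro h
    simpa using pattern_inv _ _ h
  · intro h
    simpa using pattern_inv _ _ h

private lemma fin2_cases (i : Fin 2) : i = 0 ∨ i = 1 := by omega

private lemma contains_iff {m k : ℕ} (T₁ T₂ : Equiv.Perm (Fin k))
    (V₁ V₂ : Equiv.Perm (Fin m)) :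
    ElectionContains ⟨2, m, ![V₁, V₂]⟩ ⟨2, k, ![T₁, T₂]⟩ ↔
      PatternContains (V₂ * V₁⁻¹) (T₂ * T₁⁻¹) ∨
      PatternContains (V₂ * V₁⁻¹) (T₂ * T₁⁻¹)⁻¹ := by
  constructor
  · rintro ⟨f, g, hf, hg, hcond⟩
    have h0 := hcond 0
    have h1 := hcond 1
    have hne : f 0 ≠ f 1 := hf.ne (show (0 : Fin 2) ≠ 1 by decide)
    rcases fin2_cases (f 0) with hf0 | hf0' <;>
      [rcases fin2_cases (f 1) with hf1' | hf1;
       rcases fin2_cases (f 1) with hf1 | hf1']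
    · exact absurd (hf0.trans hf1'.symm) hne
    pick_goal 3
    · exact absurd (hf0'.trans hf1'.symm) hne
    · left
      rw [← pattern_aux T₁ T₂ V₁ V₂]
      refine ⟨g, hg, ?_, ?_⟩
      · intro x y h
        have := h0 x y (by simpa using h)
        simpa [hf0] using this
      · intro x y h
        have := h1 x y (by simpa using h)
        simpa [hf1] using this
    · right
      rw [← pattern_inv_iff]
      have : (V₂ * V₁⁻¹)⁻¹ = V₁ * V₂⁻¹ := by group
      rw [this, ← pattern_aux T₁ T₂ V₂ V₁]
      refine ⟨g, hg, ?_, ?_⟩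
      · intro x y h
        have := h0 x y (by simpa using h)
        simpa [hf0'] using this
      · intro x y h
        have := h1 x y (by simpa using h)
        simpa [hf1] using this
  · rintro (h | h)
    · rw [← pattern_aux T₁ T₂ V₁ V₂] at h
      obtain ⟨g, hg, h1, h2⟩ := h
      refine ⟨id, g, Function.injective_id, hg, ?_⟩
      intro i x y
      fin_cases i
      · simpa using h1 x y
      · simpa using h2 x y
    · rw [← pattern_inv_iff] at h
      have e : (V₂ * V₁⁻¹)⁻¹ = V₁ * V₂⁻¹ := by group
      rw [e, ← pattern_aux T₁ T₂ V₂ V₁] at h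
      obtain ⟨g, hg, h1, h2⟩ := h
      refine ⟨![1, 0], g, ?_, hg, ?_⟩
      · intro a b hab
        fin_cases a <;> fin_cases b <;> simp_all
      · intro i x y
        fin_cases i
        · simpa using h1 x y
        · simpa using h2 x y

/-- For a `(2,k)`-configuration `(T₁,T₂)` and a fixed first vote `V₁` on `m`
candidates, the number of second votes `V₂` such that the two-vote election
`(V₁,V₂)` avoids the configuration equals `S_m(π, π⁻¹)`, the number of
`m`-permutations avoiding both `π = p(T₁,T₂) = T₂ ∘ T₁⁻¹` and its inverse. -/
theorem count_avoiding_second_votes (k m : ℕ)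
    (T₁ T₂ : Equiv.Perm (Fin k)) (V₁ : Equiv.Perm (Fin m)) :
    {V₂ : Equiv.Perm (Fin m) |
        ¬ ElectionContains ⟨2, m, ![V₁, V₂]⟩ ⟨2, k, ![T₁, T₂]⟩}.ncard =
      {σ : Equiv.Perm (Fin m) |
        ¬ PatternContains σ (T₂ * T₁⁻¹) ∧ ¬ PatternContains σ (T₂ * T₁⁻¹)⁻¹}.ncard := by
  have hset : {V₂ : Equiv.Perm (Fin m) |
        ¬ ElectionContains ⟨2, m, ![V₁, V₂]⟩ ⟨2, k, ![T₁, T₂]⟩} =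
      (fun σ => σ * V₁) '' {σ : Equiv.Perm (Fin m) |
        ¬ PatternContains σ (T₂ * T₁⁻¹) ∧ ¬ PatternContains σ (T₂ * T₁⁻¹)⁻¹} := by
    ext V₂
    simp only [Set.mem_setOf_eq, Set.mem_image]
    constructor
    · intro h
      refine ⟨V₂ * V₁⁻¹, ?_, by group⟩
      rw [contains_iff] at h
      push_neg at h
      exact ⟨h.1, h.2⟩
    · rintro ⟨σ, ⟨h1, h2⟩, rfl⟩
      rw [contains_iff]
      have : σ * V₁ * V₁⁻¹ = σ := by group
      rw [this]
      tauto
  rw [hset, Set.ncard_image_of_injective _ (fun a b h => by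
    simpa using mul_right_cancel h)]
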